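/- arXiv:1411.0706 — 6 statements merged into one kernel-verified Lean document; each statement's English description precedes it below -/
import Mathlib

section
/- Let p be prime and n a natural number with p-adic digits a_0, a_1, ..., a_s. Let σ_p(n) be the partition of n consisting of a_s copies of p^s, a_{s-1} copies of p^{s-1}, ..., a_1 copies of p, and a_0 copies of 1. Then the multinomial coefficient n!/∏(parts of σ_p(n))! is not divisible by p. -/
/-- The multinomial coefficient of a partition given as a multiset. -/
def multinom (n : ℕ) (σ : Multiset ℕ) : ℕ :=
  n.factorial / (σ.map Nat.factorial).prod

/-- σ is a partition of n: positive parts summing to n. -/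
def IsPartition (n : ℕ) (σ : Multiset ℕ) : Prop :=
  (∀ x ∈ σ, 0 < x) ∧ σ.sum = n

/-- The p-adic partition of n: a_i copies of p^i for each base-p digit a_i. -/
def padicPartition (p n : ℕ) : Multiset ℕ :=
  ∑ i ∈ Finset.range (Nat.digits p n).length,
    Multiset.replicate ((Nat.digits p n).getD i 0) (p ^ i)

/-- Product of factorials of the parts divides the factorial of the sum. -/
lemma prod_map_factorial_dvd (σ : Multiset ℕ) :
    (σ.map Nat.factorial).prod ∣ σ.sum.factorial := by
  induction σ using Multiset.induction_on with
  | empty => simp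
  | cons a s ih =>
    simp only [Multiset.map_cons, Multiset.prod_cons, Multiset.sum_cons]
    exact (mul_dvd_mul_left _ ih).trans (Nat.factorial_mul_factorial_dvd_factorial_add a s.sum)

lemma sum_getD_mul_pow (p : ℕ) (L : List ℕ) :
    ∑ i ∈ Finset.range L.length, L.getD i 0 * p ^ i = Nat.ofDigits p L := by
  induction L with
  | nil => simp
  | cons a L ih =>
    rw [List.length_cons, Finset.sum_range_succ', Nat.ofDigits_cons, ← ih, Finset.mul_sum]
    simp only [List.getD_cons_succ, List.getD_cons_zero, pow_zero, mul_one, pow_succ]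
    rw [add_comm]
    congr 1
    exact Finset.sum_congr rfl fun x _ => by ring

lemma padicPartition_sum (p n : ℕ) (hp : 1 < p) : (padicPartition p n).sum = n := by
  unfold padicPartition
  rw [Multiset.sum_sum]
  simp only [Multiset.sum_replicate, smul_eq_mul]
  rw [sum_getD_mul_pow p (Nat.digits p n), Nat.ofDigits_digits]

lemma digits_pow_sum (p i : ℕ) (hp : 1 < p) : (Nat.digits p (p ^ i)).sum = 1 := by
  have h : p ^ i = p ^ i * 1 := (mul_one _).symm
  rw [h, Nat.digits_base_pow_mul hp one_pos, List.sum_append, List.sum_replicate,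
    Nat.digits_of_lt p 1 one_ne_zero hp]
  simp

theorem padic_partition_multinomial_not_dvd (p n : ℕ) (hp : p.Prime) :
    ¬ p ∣ multinom n (padicPartition p n) := by
  haveI : Fact p.Prime := ⟨hp⟩
  have hp1 : 1 < p := hp.one_lt
  set L := Nat.digits p n with hL
  set D := ((padicPartition p n).map Nat.factorial).prod with hD
  have hsum : (padicPartition p n).sum = n := padicPartition_sum p n hp1
  have hdvd : D ∣ n.factorial := by
    have := prod_map_factorial_dvd (padicPartition p n)
    rwa [hsum] at this
  have hDne : D ≠ 0 := by
    intro h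
    exact absurd (h ▸ hdvd) (by simpa using (Nat.factorial_pos n).ne')
  -- express D as a finset product of powers of factorials
  have hDprod : D = ∏ i ∈ Finset.range L.length, ((p ^ i).factorial) ^ (L.getD i 0) := by
    rw [hD]
    unfold padicPartition
    rw [show Multiset.map Nat.factorial = ⇑(Multiset.mapAddMonoidHom Nat.factorial) from rfl,
      map_sum, Multiset.prod_sum]
    simp [Multiset.map_replicate, Multiset.prod_replicate]
    rfl
  -- valuation of D
  have hvalD : (p - 1) * padicValNat p D =
      ∑ i ∈ Finset.range L.length, L.getD i 0 * (p ^ i - 1) := by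
    rw [hDprod, ← Nat.factorization_def _ hp, Nat.factorization_prod
      (fun i _ => pow_ne_zero _ (Nat.factorial_pos _).ne')]
    simp only [Nat.factorization_pow, Finsupp.coe_finset_sum, Finsupp.coe_smul,
      Finset.sum_apply, Pi.smul_apply, smul_eq_mul, Finset.mul_sum]
    refine Finset.sum_congr rfl fun i _ => ?_
    rw [Nat.factorization_def _ hp, ← mul_assoc, mul_comm (p-1) (L.getD i 0), mul_assoc,
      sub_one_mul_padicValNat_factorial (p := p) (p ^ i), digits_pow_sum p i hp1]
  -- the sum equals n - digit sum
  have hdsle : L.sum ≤ n := Nat.digit_sum_le p n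
  have hLs : L.sum = ∑ i ∈ Finset.range L.length, L.getD i 0 := by
    have := sum_getD_mul_pow 1 L
    simpa [Nat.ofDigits_one] using this.symm
  have hn : ∑ i ∈ Finset.range L.length, L.getD i 0 * p ^ i = n := by
    rw [sum_getD_mul_pow, hL, Nat.ofDigits_digits]
  have hkey : ∑ i ∈ Finset.range L.length, L.getD i 0 * (p ^ i - 1) = n - L.sum := by
    have h1 : ∀ i ∈ Finset.range L.length,
        L.getD i 0 * (p ^ i - 1) = L.getD i 0 * p ^ i - L.getD i 0 := by
      intro i _
      rw [Nat.mul_sub, mul_one]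
    rw [Finset.sum_congr rfl h1,
      Finset.sum_tsub_distrib (f := fun i => L.getD i 0 * p ^ i) (g := fun i => L.getD i 0) _
        (fun i _ => Nat.le_mul_of_pos_right _ (pow_pos hp.pos i)), hn, hLs]
  have hvalF : (p - 1) * padicValNat p n.factorial = n - L.sum :=
    sub_one_mul_padicValNat_factorial n
  have h2 : (p - 1) * padicValNat p D = (p - 1) * padicValNat p n.factorial := by
    rw [hvalD, hkey, hvalF]
  have hval_eq : padicValNat p D = padicValNat p n.factorial :=
    Nat.eq_of_mul_eq_mul_left (by omega : 0 < p - 1) h2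
  have hmul : multinom n (padicPartition p n) = n.factorial / D := rfl
  have hpos : 0 < multinom n (padicPartition p n) := by
    rw [hmul]
    exact Nat.div_pos (Nat.le_of_dvd (Nat.factorial_pos n) hdvd) (Nat.pos_of_ne_zero hDne)
  intro hdvd'
  have hval0 : padicValNat p (multinom n (padicPartition p n)) = 0 := by
    rw [hmul, padicValNat.div_of_dvd hdvd, hval_eq, Nat.sub_self]
  exact (dvd_iff_padicValNat_ne_zero hpos.ne').1 hdvd' hval0
end

section
/- Let p be prime and s ≥ 1, and let n = p^s. The multinomial coefficient associated to the partition of n into p copies of p^{s-1}, namely (p^s)!/((p^{s-1})!)^p, is divisible by p but not by p². -/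
theorem prime_pow_special_partition (p s : ℕ) (hp : p.Prime) (hs : 1 ≤ s) :
    p ∣ (p ^ s).factorial / ((p ^ (s - 1)).factorial) ^ p ∧
      ¬ p ^ 2 ∣ (p ^ s).factorial / ((p ^ (s - 1)).factorial) ^ p := by
  haveI : Fact p.Prime := ⟨hp⟩
  set m := p ^ (s - 1) with hm
  have hps : p ^ s = p * m := by
    rw [hm, ← pow_succ']
    congr 1
    omega
  -- divisibility of the product of factorials
  have hdvd : (m.factorial) ^ p ∣ (p ^ s).factorial := by
    have := Nat.prod_factorial_dvd_factorial_sum (Finset.range p) (fun _ => m)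
    simpa [Finset.prod_const, Finset.sum_const, hps, mul_comm] using this
  set q := (p ^ s).factorial / (m.factorial) ^ p with hq
  have hqmul : q * (m.factorial) ^ p = (p ^ s).factorial := Nat.div_mul_cancel hdvd
  have hq0 : q ≠ 0 := by
    intro h
    rw [h, zero_mul] at hqmul
    exact (Nat.factorial_ne_zero _) hqmul.symm
  have hfac0 : m.factorial ≠ 0 := Nat.factorial_ne_zero _
  -- valuations
  have hvmul : padicValNat p q + p * padicValNat p m.factorial
      = padicValNat p (p ^ s).factorial := by
    rw [← hqmul, padicValNat.mul hq0 (pow_ne_zero _ hfac0), padicValNat.pow _ _]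
  have hvn : padicValNat p (p ^ s).factorial = padicValNat p m.factorial + m := by
    rw [hps]; exact padicValNat_factorial_mul m
  -- sum of digits of m = p^(s-1) is 1
  have hdig : (p.digits m).sum = 1 := by
    have := Nat.digits_base_pow_mul (b := p) (k := s - 1) (m := 1) hp.one_lt one_pos
    rw [mul_one, ← hm] at this
    rw [this]
    simp [Nat.digits_def' hp.one_lt, Nat.Prime.one_lt hp]
  have hleg : (p - 1) * padicValNat p m.factorial = m - 1 := by
    rw [sub_one_mul_padicValNat_factorial (p := p) m, hdig]
  have hm1 : 1 ≤ m := Nat.one_le_pow _ _ hp.pos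
  have hp1 : 1 < p := hp.one_lt
  have hvq : padicValNat p q = 1 := by
    have h1 := hvmul
    rw [hvn] at h1
    -- p * v = v + (p-1)*v = v + (m-1)
    have h2 : p * padicValNat p m.factorial
        = padicValNat p m.factorial + (m - 1) := by
      rw [← hleg]
      have : p * padicValNat p m.factorial
          = (1 + (p - 1)) * padicValNat p m.factorial := by
        congr 1; omega
      rw [this, add_mul, one_mul]
    omega
  constructor
  · have : p ^ 1 ∣ q := by
      rw [← hvq]; exact pow_padicValNat_dvd
    simpa using this
  · intro h
    rw [padicValNat_dvd_iff_le hq0] at h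
    omega
end

section
/- Let q be prime and t ≥ 1, and let n = q^t + 1. The multinomial coefficient (q^t+1)!/(((q^{t-1})!)^q · 1!) associated to the partition of n into q copies of q^{t-1} together with one part equal to 1 is divisible by q but not by q². -/
open Nat

lemma padicVal_fact_pow (q k : ℕ) (hq : q.Prime) :
    (q - 1) * padicValNat q ((q ^ k)!) = q ^ k - 1 := by
  haveI : Fact q.Prime := ⟨hq⟩
  rw [sub_one_mul_padicValNat_factorial]
  have h : q.digits (q ^ k) = List.replicate k 0 ++ q.digits 1 := by
    simpa using Nat.digits_base_pow_mul hq.one_lt (m := 1) one_pos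
  rw [h, Nat.digits_def' hq.one_lt one_pos, Nat.div_eq_of_lt hq.one_lt,
    Nat.mod_eq_of_lt hq.one_lt]
  simp

theorem prime_pow_succ_special_partition (q t : ℕ) (hq : q.Prime) (ht : 1 ≤ t) :
    q ∣ (q ^ t + 1).factorial / (((q ^ (t - 1)).factorial) ^ q * Nat.factorial 1) ∧
      ¬ q ^ 2 ∣ (q ^ t + 1).factorial / (((q ^ (t - 1)).factorial) ^ q * Nat.factorial 1) := by
  haveI : Fact q.Prime := ⟨hq⟩
  set m := q ^ (t - 1) with hm
  have hqm : q * m = q ^ t := by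
    rw [hm, ← pow_succ']
    congr 1
    omega
  set M := Nat.multinomial (Finset.range q) (fun _ => m) with hM
  have hspec : (m !) ^ q * M = (q ^ t)! := by
    have := Nat.multinomial_spec (Finset.range q) (fun _ => m)
    simpa [Finset.prod_const, Finset.sum_const, hqm, Finset.card_range] using this
  have hMne : M ≠ 0 := by
    intro h
    rw [h, mul_zero] at hspec
    exact (Nat.factorial_ne_zero _) hspec.symm
  have hval : (q ^ t + 1)! / ((m !) ^ q * Nat.factorial 1) = (q ^ t + 1) * M := by
    rw [Nat.factorial_one, mul_one, Nat.factorial_succ, ← hspec, mul_comm ((m !) ^ q) M,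
      ← mul_assoc, Nat.mul_div_cancel _ (Nat.pos_of_ne_zero (by positivity))]
  rw [hval]
  have hq2 : 2 ≤ q := hq.two_le
  have hmp : 1 ≤ m := Nat.one_le_pow _ _ hq.pos
  have hvm : padicValNat q M = 1 := by
    have h1 : (q - 1) * padicValNat q ((q ^ t)!) = q ^ t - 1 := padicVal_fact_pow q t hq
    have h2 : (q - 1) * padicValNat q (m !) = m - 1 := padicVal_fact_pow q (t - 1) hq
    have h3 : padicValNat q ((q ^ t)!) = q * padicValNat q (m !) + padicValNat q M := by
      rw [← hspec, padicValNat.mul (by positivity) hMne,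
        padicValNat.pow _ _]
    have h4 : q * (m - 1) + q * 1 = q * m := by
      rw [← Nat.mul_add]; congr 1; omega
    have h5 : (q - 1) * (q * padicValNat q (m !)) = q * (m - 1) := by
      rw [mul_left_comm, h2]
    rw [h3, mul_add, h5] at h1
    have key : (q - 1) * padicValNat q M = (q - 1) * 1 := by
      rw [mul_one]; omega
    exact Nat.eq_of_mul_eq_mul_left (by omega) key
  have hnd : ¬ q ∣ (q ^ t + 1) := by
    intro h
    have h1 : q ∣ 1 := (Nat.dvd_add_right (dvd_pow_self q (by omega))).mp h
    have := Nat.dvd_one.mp h1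
    omega
  have hNne : (q ^ t + 1) * M ≠ 0 := by positivity
  have hvN : padicValNat q ((q ^ t + 1) * M) = 1 := by
    rw [padicValNat.mul (by positivity) hMne, padicValNat.eq_zero_of_not_dvd hnd, hvm]
  constructor
  · have := (hq.pow_dvd_iff_le_factorization hNne).mpr
      (by rw [Nat.factorization_def _ hq, hvN] : 1 ≤ ((q ^ t + 1) * M).factorization q)
    simpa using this
  · intro h
    have := (hq.pow_dvd_iff_le_factorization hNne).mp h
    rw [Nat.factorization_def _ hq, hvN] at this
    omega
end

section
/- Let n ≥ 3 be such that n is not a prime power and n - 1 is not a prime power. Then the greatest common divisor, over all partitions σ of n with every part at most n - 2, of the multinomial coefficients n!/∏σ_i! equals 1. -/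
/-- `g` is the gcd of the multinomial coefficients over all partitions of `n`
with every part at most `n - 2`. -/
def IsGcdOfMultinomials (n g : ℕ) : Prop :=
  (∀ σ : Multiset ℕ, IsPartition n σ → (∀ x ∈ σ, x ≤ n - 2) → g ∣ multinom n σ) ∧
    ∀ d : ℕ, (∀ σ : Multiset ℕ, IsPartition n σ → (∀ x ∈ σ, x ≤ n - 2) → d ∣ multinom n σ) →
      d ∣ g

/-- Iterated Lucas: `C(p^a t, p^a) ≡ t (mod p)`. -/
theorem choose_pow_mul_modEq (p : ℕ) [Fact p.Prime] (a t : ℕ) :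
    Nat.choose (p ^ a * t) (p ^ a) ≡ t [MOD p] := by
  induction a with
  | zero => simpa using Nat.ModEq.refl t
  | succ a ih =>
    have key := Choose.choose_modEq_choose_mod_mul_choose_div_nat
      (p := p) (n := p * (p ^ a * t)) (k := p * p ^ a)
    have hp : 0 < p := (Fact.out : p.Prime).pos
    have h1 : (p * (p ^ a * t)) % p = 0 := Nat.mul_mod_right _ _
    have h2 : (p * p ^ a) % p = 0 := Nat.mul_mod_right _ _
    have h3 : (p * (p ^ a * t)) / p = p ^ a * t := Nat.mul_div_cancel_left _ hp
    have h4 : (p * p ^ a) / p = p ^ a := Nat.mul_div_cancel_left _ hp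
    rw [h1, h2, h3, h4] at key
    simp only [Nat.choose_self, one_mul] at key
    have : p ^ (a + 1) * t = p * (p ^ a * t) := by ring
    rw [this, pow_succ, mul_comm (p ^ a) p]
    exact key.trans ih

/-- If `p ∣ m` and `m` is not a prime power, then there is `k` with
`2 ≤ k`, `2 ≤ m - k`, `k ≤ m` and `p ∤ C(m, k)`. -/
theorem exists_choose_not_dvd (p m : ℕ) (hp : p.Prime) (hpm : p ∣ m)
    (hm : ¬ IsPrimePow m) (hm0 : 0 < m) :
    ∃ k, 2 ≤ k ∧ k + 2 ≤ m ∧ 2 ≤ m - k ∧ ¬ p ∣ Nat.choose m k := by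
  haveI : Fact p.Prime := ⟨hp⟩
  set a := m.factorization p with ha
  have ha1 : 1 ≤ a := (hp.factorization_pos_of_dvd hm0.ne' hpm)
  set t := m / p ^ a with ht
  have hsplit : p ^ a * t = m := Nat.ordProj_mul_ordCompl_eq_self m p
  have hpt : ¬ p ∣ t := Nat.not_dvd_ordCompl hp hm0.ne'
  have ht2 : 2 ≤ t := by
    rcases Nat.lt_or_ge t 2 with h | h
    · interval_cases t
      · exact absurd (by omega : m = 0) hm0.ne'
      · exact absurd ⟨p, a, hp.prime, ha1, by simpa using hsplit⟩ hm
    · exact h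
  have hpa2 : 2 ≤ p ^ a := by
    calc 2 ≤ p := hp.two_le
    _ = p ^ 1 := (pow_one p).symm
    _ ≤ p ^ a := Nat.pow_le_pow_right hp.pos ha1
  refine ⟨p ^ a, hpa2, ?_, ?_, ?_⟩
  · have : p ^ a * 2 ≤ p ^ a * t := Nat.mul_le_mul_left _ ht2
    omega
  · have : p ^ a * 2 ≤ p ^ a * t := Nat.mul_le_mul_left _ ht2
    omega
  · intro hdvd
    have hmod : Nat.choose m (p ^ a) ≡ t [MOD p] := by
      rw [← hsplit]; exact choose_pow_mul_modEq p a t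
    have h0 : t ≡ 0 [MOD p] := hmod.symm.trans (Nat.modEq_zero_iff_dvd.mpr hdvd)
    exact hpt (Nat.modEq_zero_iff_dvd.mp h0)

theorem multinom_pair (n a b : ℕ) (h : a + b = n) :
    multinom n {a, b} = Nat.choose n a := by
  have ha : a ≤ n := by omega
  have hb : n - a = b := by omega
  have key : Nat.choose n a * (a.factorial * b.factorial) = n.factorial := by
    have h2 := Nat.choose_mul_factorial_mul_factorial ha
    rw [hb] at h2
    rw [← h2]; ring
  unfold multinom
  simp only [Multiset.insert_eq_cons, Multiset.map_cons, Multiset.map_singleton,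
    Multiset.prod_cons, Multiset.prod_singleton]
  rw [← key, Nat.mul_div_cancel _ (Nat.mul_pos a.factorial_pos b.factorial_pos)]

theorem multinom_triple (n a b : ℕ) (h : 1 + a + b = n) :
    multinom n {1, a, b} = n * Nat.choose (n - 1) a := by
  have ha : a ≤ n - 1 := by omega
  have hb : n - 1 - a = b := by omega
  have key : n * Nat.choose (n - 1) a * (a.factorial * b.factorial) = n.factorial := by
    have h2 := Nat.choose_mul_factorial_mul_factorial ha
    rw [hb] at h2
    have h3 : n * (n - 1).factorial = n.factorial := Nat.mul_factorial_pred (by omega)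
    calc n * Nat.choose (n - 1) a * (a.factorial * b.factorial)
        = n * (Nat.choose (n - 1) a * a.factorial * b.factorial) := by ring
      _ = n * (n - 1).factorial := by rw [h2]
      _ = n.factorial := h3
  unfold multinom
  simp only [Multiset.insert_eq_cons, Multiset.map_cons, Multiset.map_singleton,
    Multiset.prod_cons, Multiset.prod_singleton, Nat.factorial_one, one_mul]
  rw [← key, Nat.mul_div_cancel _ (Nat.mul_pos a.factorial_pos b.factorial_pos)]

theorem gcd_multinomials_one (n : ℕ) (hn : 3 ≤ n)
    (h1 : ¬ IsPrimePow n) (h2 : ¬ IsPrimePow (n - 1)) :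
    IsGcdOfMultinomials n 1 := by
  constructor
  · intro σ _ _; exact one_dvd _
  · intro d hd
    rw [Nat.dvd_one]
    -- d divides n * (n - 1)
    have hbase : d ∣ n * (n - 1) := by
      have hpart : IsPartition n ({1, 1, n - 2} : Multiset ℕ) := by
        constructor
        · intro x hx
          simp only [Multiset.insert_eq_cons, Multiset.mem_cons, Multiset.mem_singleton] at hx
          rcases hx with rfl | rfl | rfl <;> omega
        · simp only [Multiset.insert_eq_cons, Multiset.sum_cons, Multiset.sum_singleton]
          omega
      have hle : ∀ x ∈ ({1, 1, n - 2} : Multiset ℕ), x ≤ n - 2 := by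
        intro x hx
        simp only [Multiset.insert_eq_cons, Multiset.mem_cons, Multiset.mem_singleton] at hx
        rcases hx with rfl | rfl | rfl <;> omega
      have := hd _ hpart hle
      rwa [multinom_triple n 1 (n - 2) (by omega), Nat.choose_one_right] at this
    by_contra hd1
    have hd0 : d ≠ 0 := by
      rintro rfl
      rw [Nat.zero_dvd] at hbase
      have : 0 < n * (n - 1) := Nat.mul_pos (by omega) (by omega)
      omega
    set p := d.minFac with hpdef
    have hp : p.Prime := Nat.minFac_prime hd1
    have hpd : p ∣ d := Nat.minFac_dvd d
    have hpall : ∀ σ : Multiset ℕ, IsPartition n σ → (∀ x ∈ σ, x ≤ n - 2) →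
        p ∣ multinom n σ := fun σ h h' => hpd.trans (hd σ h h')
    by_cases hpn : p ∣ n
    · obtain ⟨k, hk2, hkn, hnk2, hch⟩ := exists_choose_not_dvd p n hp hpn h1 (by omega)
      have hpart : IsPartition n ({k, n - k} : Multiset ℕ) := by
        constructor
        · intro x hx
          simp only [Multiset.insert_eq_cons, Multiset.mem_cons, Multiset.mem_singleton] at hx
          rcases hx with rfl | rfl <;> omega
        · simp only [Multiset.insert_eq_cons, Multiset.sum_cons, Multiset.sum_singleton]
          omega
      have hle : ∀ x ∈ ({k, n - k} : Multiset ℕ), x ≤ n - 2 := by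
        intro x hx
        simp only [Multiset.insert_eq_cons, Multiset.mem_cons, Multiset.mem_singleton] at hx
        rcases hx with rfl | rfl <;> omega
      have := hpall _ hpart hle
      rw [multinom_pair n k (n - k) (by omega)] at this
      exact hch this
    · by_cases hpn1 : p ∣ (n - 1)
      · obtain ⟨k, hk2, hkn, hnk2, hch⟩ :=
          exists_choose_not_dvd p (n - 1) hp hpn1 h2 (by omega)
        have hpart : IsPartition n ({1, k, n - 1 - k} : Multiset ℕ) := by
          constructor
          · intro x hx
            simp only [Multiset.insert_eq_cons, Multiset.mem_cons, Multiset.mem_singleton] at hx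
            rcases hx with rfl | rfl | rfl <;> omega
          · simp only [Multiset.insert_eq_cons, Multiset.sum_cons, Multiset.sum_singleton]
            omega
        have hle : ∀ x ∈ ({1, k, n - 1 - k} : Multiset ℕ), x ≤ n - 2 := by
          intro x hx
          simp only [Multiset.insert_eq_cons, Multiset.mem_cons, Multiset.mem_singleton] at hx
          rcases hx with rfl | rfl | rfl <;> omega
        have hdvd := hpall _ hpart hle
        rw [multinom_triple n k (n - 1 - k) (by omega)] at hdvd
        rcases hp.dvd_mul.mp hdvd with h | h
        · exact hpn h
        · exact hch h
      · rcases hp.dvd_mul.mp (hpd.trans hbase) with h | h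
        · exact hpn h
        · exact hpn1 h
end

section
/- Let n = q^t + 1 for a prime q and t ≥ 1, and suppose n is not a prime power. Then the greatest common divisor, over all partitions σ of n with every part at most n - 2, of the multinomial coefficients n!/∏σ_i! equals q. -/
open Finset

lemma prodFactDvd (σ : Multiset ℕ) : (σ.map Nat.factorial).prod ∣ Nat.factorial σ.sum := by
  induction σ using Multiset.induction with
  | empty => simp
  | cons a s ih =>
    simp only [Multiset.map_cons, Multiset.prod_cons, Multiset.sum_cons]
    exact (mul_dvd_mul_left _ ih).trans (Nat.factorial_mul_factorial_dvd_factorial_add a s.sum)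

lemma prodFactPos (σ : Multiset ℕ) : 0 < (σ.map Nat.factorial).prod := by
  apply Multiset.prod_pos
  intro x hx
  obtain ⟨a, _, rfl⟩ := Multiset.mem_map.1 hx
  exact Nat.factorial_pos a

lemma multinom_mul (n : ℕ) (σ : Multiset ℕ) (h : σ.sum = n) :
    multinom n σ * (σ.map Nat.factorial).prod = n.factorial :=
  Nat.div_mul_cancel (h ▸ prodFactDvd σ)

lemma multinom_ne_zero (n : ℕ) (σ : Multiset ℕ) (h : σ.sum = n) : multinom n σ ≠ 0 := by
  intro h0
  have := multinom_mul n σ h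
  rw [h0, zero_mul] at this
  exact Nat.factorial_ne_zero n this.symm

lemma legendre {p : ℕ} (hp : p.Prime) {m B : ℕ} (h : Nat.log p m < B) :
    (Nat.factorial m).factorization p = ∑ i ∈ Ico 1 B, m / p ^ i := by
  rw [Nat.factorization_def _ hp]
  haveI := Fact.mk hp
  exact padicValNat_factorial h

lemma mult_key (p n : ℕ) (σ : Multiset ℕ) (h : σ.sum = n) :
    (multinom n σ).factorization p + ((σ.map Nat.factorial).prod).factorization p
      = n.factorial.factorization p := by
  have hm := multinom_mul n σ h
  calc (multinom n σ).factorization p + ((σ.map Nat.factorial).prod).factorization p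
      = (multinom n σ * (σ.map Nat.factorial).prod).factorization p := by
        rw [Nat.factorization_mul (multinom_ne_zero n σ h) (prodFactPos σ).ne', Finsupp.add_apply]
    _ = n.factorial.factorization p := by rw [hm]

lemma factorization_prod_map (p : ℕ) (σ : Multiset ℕ) :
    ((σ.map Nat.factorial).prod).factorization p
      = (σ.map fun a => (Nat.factorial a).factorization p).sum := by
  induction σ using Multiset.induction with
  | empty => simp
  | cons a σ ih =>
    simp only [Multiset.map_cons, Multiset.prod_cons, Multiset.sum_cons,
      Nat.factorization_mul (Nat.factorial_ne_zero a) (prodFactPos σ).ne', Finsupp.add_apply, ih]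

lemma sum_map_sum (σ : Multiset ℕ) (s : Finset ℕ) (f : ℕ → ℕ → ℕ) :
    (σ.map fun a => ∑ i ∈ s, f i a).sum = ∑ i ∈ s, (σ.map fun a => f i a).sum := by
  induction σ using Multiset.induction with
  | empty => simp
  | cons a σ ih =>
    simp only [Multiset.map_cons, Multiset.sum_cons, ih, Finset.sum_add_distrib]

lemma sum_map_div_le (σ : Multiset ℕ) (m : ℕ) : (σ.map fun a => a / m).sum ≤ σ.sum / m := by
  induction σ using Multiset.induction with
  | empty => simp
  | cons a σ ih =>
    simp only [Multiset.map_cons, Multiset.sum_cons]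
    exact le_trans (Nat.add_le_add_left ih _) (Nat.add_div_le_add_div a σ.sum m)

lemma div1 {q i : ℕ} (e : ℕ) (hq : 2 ≤ q) (hi : 1 ≤ i) :
    (q ^ (i + e) + 1) / q ^ i = q ^ e := by
  have h1 : q ^ (i + e) + 1 = 1 + q ^ e * q ^ i := by
    rw [add_comm i e, pow_add]; ring
  rw [h1, Nat.add_mul_div_right _ _ (pow_pos (by omega) i),
    Nat.div_eq_of_lt (Nat.one_lt_pow (by omega) hq), zero_add]

lemma div2 {q i : ℕ} (e : ℕ) (hq : 2 ≤ q) :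
    (q ^ (i + e + 1) - q ^ (i + e)) / q ^ i = q ^ (e + 1) - q ^ e := by
  have h1 : q ^ (i + e + 1) - q ^ (i + e) = (q ^ (e + 1) - q ^ e) * q ^ i := by
    rw [Nat.sub_mul, ← pow_add, ← pow_add]
    congr 2 <;> omega
  rw [h1, Nat.mul_div_cancel _ (pow_pos (by omega) i)]

lemma qsum (q t : ℕ) (hq : 2 ≤ q) (ht : 1 ≤ t) (h3 : q ^ (t - 1) + 2 ≤ q ^ t) :
    ∑ i ∈ Ico 1 (t + 1), (q ^ t + 1) / q ^ i
      = ((∑ i ∈ Ico 1 (t + 1), (q ^ (t - 1) + 1) / q ^ i)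
        + ∑ i ∈ Ico 1 (t + 1), (q ^ t - q ^ (t - 1)) / q ^ i) + 1 := by
  have hpow : ∀ m : ℕ, 0 < q ^ m := fun m => pow_pos (by omega) m
  rw [Finset.sum_Ico_succ_top ht, Finset.sum_Ico_succ_top ht, Finset.sum_Ico_succ_top ht]
  have e1 : (q ^ t + 1) / q ^ t = 1 := by
    apply Nat.div_eq_of_lt_le <;> simp <;> omega
  have e2 : (q ^ (t - 1) + 1) / q ^ t = 0 := Nat.div_eq_of_lt (by omega)
  have e3 : (q ^ t - q ^ (t - 1)) / q ^ t = 0 := Nat.div_eq_of_lt (by have := hpow (t-1); omega)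
  rw [e1, e2, e3]
  have main : ∑ i ∈ Ico 1 t, (q ^ t + 1) / q ^ i
      = (∑ i ∈ Ico 1 t, (q ^ (t - 1) + 1) / q ^ i)
        + ∑ i ∈ Ico 1 t, (q ^ t - q ^ (t - 1)) / q ^ i := by
    rw [← Finset.sum_add_distrib]
    apply Finset.sum_congr rfl
    intro i hi
    obtain ⟨hi1, hi2⟩ := Finset.mem_Ico.1 hi
    obtain ⟨e, he⟩ : ∃ e, t - 1 = i + e := ⟨t - 1 - i, by omega⟩
    have ht' : t = i + e + 1 := by omega
    rw [ht', Nat.add_sub_cancel] at *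
    rw [show i + e + 1 = i + (e + 1) by omega, div1 (e + 1) hq hi1, div1 e hq hi1,
      show i + (e + 1) = i + e + 1 by omega, div2 e hq]
    have : q ^ e ≤ q ^ (e + 1) := Nat.pow_le_pow_right (by omega) (by omega)
    omega
  omega

lemma psum (p j b : ℕ) (hp : 2 ≤ p) :
    ∑ i ∈ Ico 1 (j + 1), (p ^ j + b) / p ^ i
      = (∑ i ∈ Ico 1 (j + 1), p ^ j / p ^ i) + ∑ i ∈ Ico 1 (j + 1), b / p ^ i := by
  rw [← Finset.sum_add_distrib]
  apply Finset.sum_congr rfl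
  intro i hi
  obtain ⟨hi1, hi2⟩ := Finset.mem_Ico.1 hi
  have hij : i ≤ j := by omega
  have h1 : p ^ j / p ^ i = p ^ (j - i) := Nat.pow_div hij (by omega)
  have hji : j - i + i = j := by omega
  have h2 : p ^ j + b = b + p ^ (j - i) * p ^ i := by
    rw [← pow_add, hji, Nat.add_comm]
  rw [h1, h2, Nat.add_mul_div_right _ _ (pow_pos (by omega) i)]
  omega

theorem gcd_multinomials_prime_pow_succ (q t : ℕ) (hq : q.Prime) (ht : 1 ≤ t)
    (h1 : ¬ IsPrimePow (q ^ t + 1)) :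
    IsGcdOfMultinomials (q ^ t + 1) q := by
  set n := q ^ t + 1 with hn
  have hq2 : 2 ≤ q := hq.two_le
  have hqt2 : 2 ≤ q ^ t := le_trans hq2 (Nat.le_self_pow (by omega : t ≠ 0) q)
  have hq1pow : ∀ m : ℕ, 0 < q ^ m := fun m => pow_pos (by omega) m
  have hq3 : q ^ (t - 1) + 2 ≤ q ^ t := by
    rcases Nat.lt_or_ge t 2 with h | h
    · have ht1 : t = 1 := by omega
      subst ht1
      simp only [pow_one]
      rcases eq_or_ne q 2 with rfl | hne
      · exact absurd ⟨3, 1, Nat.prime_iff.mp (by norm_num), one_pos, by omega⟩ h1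
      · simp only [Nat.sub_self, pow_zero]; omega
    · have h2 : 2 ≤ q ^ (t - 1) := le_trans hq2 (Nat.le_self_pow (by omega) q)
      calc q ^ (t - 1) + 2 ≤ 2 * q ^ (t - 1) := by omega
        _ ≤ q * q ^ (t - 1) := Nat.mul_le_mul_right _ hq2
        _ = q ^ t := by rw [← pow_succ']; congr 1; omega
  have hlogn : Nat.log q n < t + 1 := by
    rw [Nat.log_lt_iff_lt_pow hq.one_lt (by omega)]
    have : q ^ (t + 1) = q * q ^ t := by rw [pow_succ']
    have h4 : 2 * q ^ t ≤ q * q ^ t := Nat.mul_le_mul_right _ hq2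
    omega
  constructor
  · rintro σ ⟨hpos, hsum⟩ hle
    have hmne : multinom n σ ≠ 0 := multinom_ne_zero n σ hsum
    rw [Nat.Prime.dvd_iff_one_le_factorization hq hmne]
    have key := mult_key q n σ hsum
    have hvn : n.factorial.factorization q = ∑ i ∈ Ico 1 (t + 1), n / q ^ i :=
      legendre hq hlogn
    have hvp : ((σ.map Nat.factorial).prod).factorization q
        ≤ ∑ i ∈ Ico 1 t, n / q ^ i := by
      rw [factorization_prod_map]
      have hmc : (σ.map fun a => (Nat.factorial a).factorization q)
          = σ.map fun a => ∑ i ∈ Ico 1 (t + 1), a / q ^ i := by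
        apply Multiset.map_congr rfl
        intro a ha
        apply legendre hq
        calc Nat.log q a ≤ Nat.log q n := Nat.log_mono_right (by have := hle a ha; omega)
          _ < t + 1 := hlogn
      rw [hmc, sum_map_sum, Finset.sum_Ico_succ_top ht]
      have h0 : (σ.map fun a => a / q ^ t).sum = 0 := by
        apply Multiset.sum_eq_zero
        intro x hx
        obtain ⟨a, ha, rfl⟩ := Multiset.mem_map.1 hx
        exact Nat.div_eq_of_lt (by have := hle a ha; omega)
      rw [h0, add_zero]
      apply Finset.sum_le_sum
      intro i _
      calc (σ.map fun a => a / q ^ i).sum ≤ σ.sum / q ^ i := sum_map_div_le σ _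
        _ = n / q ^ i := by rw [hsum]
    have hlast : n / q ^ t = 1 := by
      apply Nat.div_eq_of_lt_le <;> simp <;> omega
    rw [Finset.sum_Ico_succ_top ht, hlast] at hvn
    omega
  · intro d hd
    -- q-witness
    set a := q ^ (t - 1) + 1 with ha
    set b := q ^ t - q ^ (t - 1) with hb
    have hab : a + b = n := by have := hq1pow (t - 1); omega
    have hsumab : ({a, b} : Multiset ℕ).sum = n := by
      simp [Multiset.insert_eq_cons, hab]
    have hIab : IsPartition n {a, b} := by
      refine ⟨?_, hsumab⟩
      intro x hx
      simp only [Multiset.insert_eq_cons, Multiset.mem_cons, Multiset.mem_singleton] at hx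
      rcases hx with rfl | rfl <;> omega
    have hLab : ∀ x ∈ ({a, b} : Multiset ℕ), x ≤ n - 2 := by
      intro x hx
      simp only [Multiset.insert_eq_cons, Multiset.mem_cons, Multiset.mem_singleton] at hx
      have := hq1pow (t - 1)
      rcases hx with rfl | rfl <;> omega
    have hwit := hd _ hIab hLab
    have hmne : multinom n {a, b} ≠ 0 := multinom_ne_zero n _ hsumab
    have hprodab : ((({a, b} : Multiset ℕ).map Nat.factorial).prod).factorization q
        = (Nat.factorial a).factorization q + (Nat.factorial b).factorization q := by
      rw [factorization_prod_map]
      simp [Multiset.insert_eq_cons]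
    have hmult1 : (multinom n {a, b}).factorization q = 1 := by
      have key := mult_key q n {a, b} hsumab
      rw [hprodab] at key
      have hva : (Nat.factorial a).factorization q = ∑ i ∈ Ico 1 (t + 1), a / q ^ i :=
        legendre hq (lt_of_le_of_lt (Nat.log_mono_right (by omega)) hlogn)
      have hvb : (Nat.factorial b).factorization q = ∑ i ∈ Ico 1 (t + 1), b / q ^ i :=
        legendre hq (lt_of_le_of_lt (Nat.log_mono_right (by omega)) hlogn)
      have hvn : n.factorial.factorization q = ∑ i ∈ Ico 1 (t + 1), n / q ^ i :=
        legendre hq hlogn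
      have hqs : (∑ i ∈ Ico 1 (t + 1), n / q ^ i)
          = ((∑ i ∈ Ico 1 (t + 1), a / q ^ i) + ∑ i ∈ Ico 1 (t + 1), b / q ^ i) + 1 := by
        rw [ha, hb]
        conv_lhs => rw [hn]
        exact qsum q t hq2 ht hq3
      rw [hva, hvb, hvn, hqs] at key
      omega
    have hd0 : d ≠ 0 := by
      rintro rfl
      exact hmne (zero_dvd_iff.1 hwit)
    rw [← Nat.factorization_le_iff_dvd hd0 hq.pos.ne']
    rw [Finsupp.le_def]
    intro p
    by_cases hpp : p.Prime
    · rcases eq_or_ne p q with rfl | hpq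
      · have hle1 : d.factorization p ≤ (multinom n {a, b}).factorization p :=
          (Finsupp.le_def.1 ((Nat.factorization_le_iff_dvd hd0 hmne).2 hwit)) p
        rw [hmult1] at hle1
        rw [Nat.Prime.factorization hq]
        simpa using hle1
      · suffices h : d.factorization p = 0 by
          simp [h]
        by_contra hne0
        have hpd : p ∣ d := (Nat.Prime.dvd_iff_one_le_factorization hpp hd0).2 (by omega)
        have hn4 : 4 ≤ n := by have := hq1pow (t - 1); omega
        rcases Nat.lt_or_ge n p with hnp | hpn
        · -- p > n
          have hsum2 : ({2, n - 2} : Multiset ℕ).sum = n := by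
            simp [Multiset.insert_eq_cons]; omega
          have hI : IsPartition n {2, n - 2} := by
            refine ⟨?_, hsum2⟩
            intro x hx
            simp only [Multiset.insert_eq_cons, Multiset.mem_cons, Multiset.mem_singleton] at hx
            rcases hx with rfl | rfl <;> omega
          have hL : ∀ x ∈ ({2, n - 2} : Multiset ℕ), x ≤ n - 2 := by
            intro x hx
            simp only [Multiset.insert_eq_cons, Multiset.mem_cons, Multiset.mem_singleton] at hx
            rcases hx with rfl | rfl <;> omega
          have hpm : p ∣ multinom n {2, n - 2} := hpd.trans (hd _ hI hL)
          have hmd : multinom n {2, n - 2} ∣ n.factorial :=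
            ⟨_, (multinom_mul n _ hsum2).symm⟩
          have hpf : p ∣ n.factorial := hpm.trans hmd
          rw [Nat.Prime.dvd_factorial hpp] at hpf
          omega
        · -- p ≤ n
          set j := Nat.log p n with hj
          have hj1 : 1 ≤ j := Nat.log_pos hpp.one_lt hpn
          have hpj : p ^ j ≤ n := Nat.pow_log_le_self p (by omega)
          set c := n - p ^ j with hc
          have hpjn : n = p ^ j + c := by omega
          have hp2 : 2 ≤ p := hpp.two_le
          have hpj2 : 2 ≤ p ^ j := le_trans hp2 (Nat.le_self_pow (by omega) p)
          rcases Nat.lt_or_ge c 2 with hcs | hc2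
          · have hc01 : c = 0 ∨ c = 1 := by omega
            rcases hc01 with hc0 | hc0
            · exact absurd ⟨p, j, hpp.prime, by omega, by omega⟩ h1
            · -- c = 1 : p ^ j = q ^ t
              have hpqt : p ^ j = q ^ t := by omega
              have hppow : p ∣ q ^ t := hpqt ▸ dvd_pow_self p (by omega : j ≠ 0)
              have hpdq : p ∣ q := Nat.Prime.dvd_of_dvd_pow hpp hppow
              exact hpq ((Nat.prime_dvd_prime_iff_eq hpp hq).1 hpdq)
          · -- c ≥ 2 : witness {p ^ j, c}
            have hsum2 : ({p ^ j, c} : Multiset ℕ).sum = n := by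
              simp [Multiset.insert_eq_cons]; omega
            have hI : IsPartition n {p ^ j, c} := by
              refine ⟨?_, hsum2⟩
              intro x hx
              simp only [Multiset.insert_eq_cons, Multiset.mem_cons, Multiset.mem_singleton] at hx
              rcases hx with rfl | rfl <;> omega
            have hL : ∀ x ∈ ({p ^ j, c} : Multiset ℕ), x ≤ n - 2 := by
              intro x hx
              simp only [Multiset.insert_eq_cons, Multiset.mem_cons, Multiset.mem_singleton] at hx
              rcases hx with rfl | rfl <;> omega
            have hmne2 : multinom n {p ^ j, c} ≠ 0 := multinom_ne_zero n _ hsum2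
            have hlogp : Nat.log p n < j + 1 := by omega
            have hv0 : (multinom n {p ^ j, c}).factorization p = 0 := by
              have key := mult_key p n {p ^ j, c} hsum2
              have hprod : ((({p ^ j, c} : Multiset ℕ).map Nat.factorial).prod).factorization p
                  = (Nat.factorial (p ^ j)).factorization p
                    + (Nat.factorial c).factorization p := by
                rw [factorization_prod_map]
                simp [Multiset.insert_eq_cons]
              rw [hprod] at key
              have hv1 : (Nat.factorial (p ^ j)).factorization p
                  = ∑ i ∈ Ico 1 (j + 1), p ^ j / p ^ i :=
                legendre hpp (by rw [Nat.log_pow hpp.one_lt]; omega)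
              have hv2 : (Nat.factorial c).factorization p = ∑ i ∈ Ico 1 (j + 1), c / p ^ i :=
                legendre hpp (lt_of_le_of_lt (Nat.log_mono_right (by omega)) hlogp)
              have hv3 : n.factorial.factorization p = ∑ i ∈ Ico 1 (j + 1), n / p ^ i :=
                legendre hpp hlogp
              have hps : (∑ i ∈ Ico 1 (j + 1), n / p ^ i)
                  = (∑ i ∈ Ico 1 (j + 1), p ^ j / p ^ i)
                    + ∑ i ∈ Ico 1 (j + 1), c / p ^ i := by
                conv_lhs => rw [hpjn]
                exact psum p j c hp2
              rw [hv1, hv2, hv3, hps] at key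
              omega
            have hpm : p ∣ multinom n {p ^ j, c} := hpd.trans (hd _ hI hL)
            rw [Nat.Prime.dvd_iff_one_le_factorization hpp hmne2] at hpm
            omega
    · simp [Nat.factorization_eq_zero_of_not_prime d hpp]
end

section
/- Suppose n = p^s = q^t + 1 for primes p, q and integers s, t ≥ 1. Then the greatest common divisor, over all partitions σ of n with every part at most n - 2, of the multinomial coefficients n!/∏σ_i! equals p·q. -/
open Nat Multiset

lemma digitsum_eq_zero {r : ℕ} (hr : 2 ≤ r) : ∀ x : ℕ, ((Nat.digits r x).sum = 0) → x = 0 := by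
  intro x
  induction x using Nat.strong_induction_on with
  | _ x ih =>
    intro hsum
    rcases Nat.eq_zero_or_pos x with h0 | h0
    · exact h0
    · rw [Nat.digits_def' hr h0, List.sum_cons] at hsum
      have h1 : x % r = 0 := by omega
      have h2 : x / r = 0 := ih (x / r) (Nat.div_lt_self h0 (by omega)) (by omega)
      have h3 := Nat.div_add_mod x r
      rw [h2, Nat.mul_zero] at h3
      omega

lemma digitsum_pos {r x : ℕ} (hr : 2 ≤ r) (hx : 0 < x) : 0 < (Nat.digits r x).sum := by
  rcases Nat.eq_zero_or_pos (Nat.digits r x).sum with h | h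
  · exact absurd (digitsum_eq_zero hr x h) (by omega)
  · exact h

lemma digitsum_eq_one {r : ℕ} (hr : 2 ≤ r) : ∀ x : ℕ, ((Nat.digits r x).sum = 1) → ∃ i, x = r ^ i := by
  intro x
  induction x using Nat.strong_induction_on with
  | _ x ih =>
    intro hsum
    rcases Nat.eq_zero_or_pos x with h0 | h0
    · subst h0; simp at hsum
    · rw [Nat.digits_def' hr h0, List.sum_cons] at hsum
      rcases Nat.eq_zero_or_pos (x % r) with h1 | h1
      · have h2 : (Nat.digits r (x / r)).sum = 1 := by omega
        obtain ⟨i, hi⟩ := ih (x / r) (Nat.div_lt_self h0 (by omega)) h2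
        have h5 := Nat.div_add_mod x r
        rw [hi] at h5
        exact ⟨i + 1, by rw [pow_succ, mul_comm (r ^ i) r]; omega⟩
      · have h2 : (Nat.digits r (x / r)).sum = 0 := by omega
        have h3 := digitsum_eq_zero hr _ h2
        have h4 : x % r = 1 := by omega
        have h5 := Nat.div_add_mod x r
        rw [h3, Nat.mul_zero] at h5
        exact ⟨0, by rw [pow_zero]; omega⟩

lemma prod_fact_dvd (σ : Multiset ℕ) : (σ.map Nat.factorial).prod ∣ (σ.sum)! := by
  induction σ using Multiset.induction with
  | empty => simp
  | cons a σ ih =>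
    rw [Multiset.map_cons, Multiset.prod_cons, Multiset.sum_cons]
    exact dvd_trans (mul_dvd_mul_left _ ih) (Nat.factorial_mul_factorial_dvd_factorial_add a σ.sum)

lemma legendre_part (r : ℕ) [hr : Fact r.Prime] (x : ℕ) :
    (r - 1) * padicValNat r (x !) + (Nat.digits r x).sum = x := by
  have h1 := sub_one_mul_padicValNat_factorial (p := r) x
  have h2 := Nat.digit_sum_le r x
  omega

lemma pv_prod (r : ℕ) [hr : Fact r.Prime] (σ : Multiset ℕ) :
    padicValNat r ((σ.map Nat.factorial).prod) = (σ.map fun x => padicValNat r (x !)).sum := by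
  induction σ using Multiset.induction with
  | empty => simp
  | cons a σ ih =>
    rw [Multiset.map_cons, Multiset.prod_cons, Multiset.map_cons, Multiset.sum_cons,
      padicValNat.mul (Nat.factorial_ne_zero a) (Multiset.prod_ne_zero (by
        intro hmem
        obtain ⟨x, _, hx⟩ := Multiset.mem_map.mp hmem
        exact Nat.factorial_ne_zero x hx)), ih]

lemma sum_eq (r : ℕ) [hr : Fact r.Prime] (σ : Multiset ℕ) :
    (r - 1) * (σ.map fun x => padicValNat r (x !)).sum
      + (σ.map fun x => (Nat.digits r x).sum).sum = σ.sum := by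
  induction σ using Multiset.induction with
  | empty => simp
  | cons a σ ih =>
    simp only [Multiset.map_cons, Multiset.sum_cons]
    have := legendre_part r a
    rw [Nat.mul_add]
    omega

lemma modeq_sum (r : ℕ) (hr : 2 ≤ r) (σ : Multiset ℕ) :
    (σ.map fun x => (Nat.digits r x).sum).sum ≡ σ.sum [MOD r - 1] := by
  induction σ using Multiset.induction with
  | empty => rfl
  | cons a σ ih =>
    simp only [Multiset.map_cons, Multiset.sum_cons]
    refine Nat.ModEq.add ?_ ih
    rcases Nat.lt_or_ge r 3 with h3 | h3
    · interval_cases r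
      · exact Nat.modEq_one
    · have h4 : r % (r - 1) = 1 := by
        have e : r - 1 + 1 = r := by omega
        nth_rewrite 1 [← e]
        rw [Nat.add_mod_left, Nat.mod_eq_of_lt (by omega)]
      exact ((Nat.modEq_digits_sum (r - 1) r h4 a)).symm

lemma geom_val (r : ℕ) [hr : Fact r.Prime] (k : ℕ) :
    padicValNat r ((r ^ k)!) = ∑ i ∈ Finset.range k, r ^ i := by
  induction k with
  | zero => simp
  | succ k ih =>
    rw [pow_succ, mul_comm, padicValNat_factorial_mul, ih, Finset.sum_range_succ]

lemma geom_id (r : ℕ) (hr : 1 ≤ r) (k : ℕ) :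
    (r - 1) * (∑ i ∈ Finset.range k, r ^ i) + 1 = r ^ k := by
  obtain ⟨r', rfl⟩ : ∃ r', r = r' + 1 := ⟨r - 1, by omega⟩
  induction k with
  | zero => simp
  | succ k ih =>
    rw [Finset.sum_range_succ, pow_succ]
    simp only [Nat.add_sub_cancel] at ih ⊢
    nlinarith [ih]

lemma multinom_val (r : ℕ) [hr : Fact r.Prime] (n : ℕ) (σ : Multiset ℕ) (hsum : σ.sum = n) :
    padicValNat r (multinom n σ) =
      padicValNat r (n !) - (σ.map fun x => padicValNat r (x !)).sum := by
  have hP : (σ.map Nat.factorial).prod ∣ n ! := hsum ▸ prod_fact_dvd σ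
  rw [multinom, padicValNat.div_of_dvd hP, pv_prod]

lemma multinom_pos (n : ℕ) (σ : Multiset ℕ) (hsum : σ.sum = n) : 0 < multinom n σ := by
  have hP : (σ.map Nat.factorial).prod ∣ n ! := hsum ▸ prod_fact_dvd σ
  exact Nat.div_pos (Nat.le_of_dvd (Nat.factorial_pos n) hP)
    (Nat.pos_of_ne_zero (fun h0 => by
      rcases Multiset.prod_eq_zero_iff.mp h0 with hmem
      obtain ⟨x, _, hx⟩ := Multiset.mem_map.mp hmem
      exact Nat.factorial_ne_zero x hx))

lemma val_lower (r : ℕ) [hr : Fact r.Prime] (n : ℕ) (σ : Multiset ℕ) (hsum : σ.sum = n) (c : ℕ)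
    (hvN : (r - 1) * padicValNat r (n !) + c = n)
    (hDS : c + (r - 1) ≤ (σ.map fun x => (Nat.digits r x).sum).sum) :
    (σ.map fun x => padicValNat r (x !)).sum + 1 ≤ padicValNat r (n !) := by
  have h1 := sum_eq r σ
  rw [hsum] at h1
  have hr2 := hr.out.two_le
  have key : (r - 1) * ((σ.map fun x => padicValNat r (x !)).sum + 1)
      ≤ (r - 1) * padicValNat r (n !) := by
    rw [Nat.mul_add, Nat.mul_one]
    omega
  exact Nat.le_of_mul_le_mul_left key (by omega)

lemma dvd_multinom (r : ℕ) [hr : Fact r.Prime] (n : ℕ) (σ : Multiset ℕ) (hsum : σ.sum = n)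
    (hv : (σ.map fun x => padicValNat r (x !)).sum + 1 ≤ padicValNat r (n !)) :
    r ∣ multinom n σ := by
  have hval := multinom_val r n σ hsum
  have h1 : 1 ≤ padicValNat r (multinom n σ) := by omega
  calc r = r ^ 1 := (pow_one r).symm
  _ ∣ r ^ padicValNat r (multinom n σ) := pow_dvd_pow r h1
  _ ∣ multinom n σ := pow_padicValNat_dvd

lemma card_le_DS_sum {r : ℕ} (hr : 2 ≤ r) (σ : Multiset ℕ) (hpos : ∀ x ∈ σ, 0 < x) :
    Multiset.card σ ≤ (σ.map fun x => (Nat.digits r x).sum).sum := by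
  induction σ using Multiset.induction with
  | empty => simp
  | cons a σ ih =>
    simp only [Multiset.map_cons, Multiset.sum_cons, Multiset.card_cons]
    have h1 : 0 < (Nat.digits r a).sum :=
      digitsum_pos hr (hpos a (Multiset.mem_cons_self a σ))
    have h2 := ih (fun x hx => hpos x (Multiset.mem_cons_of_mem hx))
    omega

theorem gcd_multinomials_both (p q s t : ℕ) (hp : p.Prime) (hq : q.Prime)
    (hs : 1 ≤ s) (ht : 1 ≤ t) (h : p ^ s = q ^ t + 1) :
    IsGcdOfMultinomials (p ^ s) (p * q) := by
  haveI fp : Fact p.Prime := ⟨hp⟩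
  haveI fq : Fact q.Prime := ⟨hq⟩
  have hp2 : 2 ≤ p := hp.two_le
  have hq2 : 2 ≤ q := hq.two_le
  have hqt2 : 2 ≤ q ^ t := by
    calc 2 ≤ q := hq2
    _ = q ^ 1 := (pow_one q).symm
    _ ≤ q ^ t := Nat.pow_le_pow_right (by omega) ht
  have hn3 : 3 ≤ p ^ s := by omega
  have hpq : p ≠ q := by
    rintro rfl
    have hd : p ∣ p ^ s - p ^ t :=
      Nat.dvd_sub (dvd_pow_self p (by omega)) (dvd_pow_self p (by omega))
    rw [show p ^ s - p ^ t = 1 by omega] at hd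
    exact absurd (Nat.le_of_dvd one_pos hd) (by omega)
  -- valuation of (p^s)! at p
  have hvNp : (p - 1) * padicValNat p ((p ^ s)!) + 1 = p ^ s := by
    rw [geom_val p s]; exact geom_id p (by omega) s
  -- valuation of (p^s)! at q
  have hvq0 : padicValNat q (q ^ t + 1) = 0 := by
    apply padicValNat.eq_zero_of_not_dvd
    intro hdvd
    have hd : q ∣ q ^ t + 1 - q ^ t := Nat.dvd_sub hdvd (dvd_pow_self q (by omega))
    rw [Nat.add_sub_cancel_left] at hd
    exact absurd (Nat.le_of_dvd one_pos hd) (by omega)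
  have hvNqe : padicValNat q ((p ^ s)!) = ∑ i ∈ Finset.range t, q ^ i := by
    rw [h, Nat.factorial_succ, padicValNat.mul (by omega) (Nat.factorial_ne_zero _), hvq0,
      Nat.zero_add, geom_val q t]
  have hvNq : (q - 1) * padicValNat q ((p ^ s)!) + 2 = p ^ s := by
    rw [hvNqe]
    have := geom_id q (by omega) t
    omega
  constructor
  · rintro σ ⟨hpos, hsum⟩ hle
    have hcard : 2 ≤ Multiset.card σ := by
      by_contra hc
      push_neg at hc
      rcases (by omega : Multiset.card σ = 0 ∨ Multiset.card σ = 1) with h0 | h1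
      · rw [Multiset.card_eq_zero] at h0
        subst h0
        rw [Multiset.sum_zero] at hsum
        omega
      · obtain ⟨a, rfl⟩ := Multiset.card_eq_one.mp h1
        rw [Multiset.sum_singleton] at hsum
        have := hle a (Multiset.mem_singleton_self a)
        omega
    -- p divides
    have hDSp2 : 2 ≤ (σ.map fun x => (Nat.digits p x).sum).sum :=
      le_trans hcard (card_le_DS_sum hp2 σ hpos)
    have hmodp : (σ.map fun x => (Nat.digits p x).sum).sum ≡ p ^ s [MOD p - 1] :=
      hsum ▸ modeq_sum p hp2 σ
    have hmodp1 : (1 : ℕ) ≡ p ^ s [MOD p - 1] := by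
      rw [Nat.modEq_iff_dvd' (by omega)]
      simpa using Nat.sub_dvd_pow_sub_pow p 1 s
    have hDSp : 1 + (p - 1) ≤ (σ.map fun x => (Nat.digits p x).sum).sum := by
      have h1 : (1 : ℕ) ≡ (σ.map fun x => (Nat.digits p x).sum).sum [MOD p - 1] :=
        hmodp1.trans hmodp.symm
      have h2 := (Nat.modEq_iff_dvd' (by omega)).mp h1
      have h3 := Nat.le_of_dvd (by omega) h2
      omega
    have hpd : p ∣ multinom (p ^ s) σ :=
      dvd_multinom p _ σ hsum (val_lower p _ σ hsum 1 hvNp hDSp)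
    -- q divides
    have hDSq3 : 3 ≤ (σ.map fun x => (Nat.digits q x).sum).sum := by
      by_contra hc
      push_neg at hc
      have hcle := card_le_DS_sum hq2 σ hpos
      have hcard2 : Multiset.card σ = 2 := by omega
      obtain ⟨a, b, rfl⟩ := Multiset.card_eq_two.mp hcard2
      have hsum2 : a + b = p ^ s := by
        simpa using hsum
      simp only [Multiset.insert_eq_cons, Multiset.map_cons, Multiset.sum_cons,
        Multiset.map_singleton, Multiset.sum_singleton] at hc
      have ha1 : 0 < (Nat.digits q a).sum :=
        digitsum_pos hq2 (hpos a (by simp))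
      have hb1 : 0 < (Nat.digits q b).sum :=
        digitsum_pos hq2 (hpos b (by simp))
      obtain ⟨i, rfl⟩ := digitsum_eq_one hq2 a (by omega)
      obtain ⟨j, rfl⟩ := digitsum_eq_one hq2 b (by omega)
      have hai : q ^ i ≤ q ^ (t - 1) := by
        apply Nat.pow_le_pow_right (by omega)
        have := hle (q ^ i) (by simp)
        have hlt : q ^ i < q ^ t := by omega
        have := (Nat.pow_lt_pow_iff_right (by omega : 1 < q)).mp hlt
        omega
      have hbj : q ^ j ≤ q ^ (t - 1) := by
        apply Nat.pow_le_pow_right (by omega)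
        have := hle (q ^ j) (by simp)
        have hlt : q ^ j < q ^ t := by omega
        have := (Nat.pow_lt_pow_iff_right (by omega : 1 < q)).mp hlt
        omega
      have hqq : q * q ^ (t - 1) = q ^ t := by
        rw [← _root_.pow_succ']
        congr 1
        omega
      nlinarith [hsum2, hai, hbj, hqq, hq2]
    have hmodq : (σ.map fun x => (Nat.digits q x).sum).sum ≡ p ^ s [MOD q - 1] :=
      hsum ▸ modeq_sum q hq2 σ
    have hmodq1 : (2 : ℕ) ≡ p ^ s [MOD q - 1] := by
      rw [Nat.modEq_iff_dvd' (by omega), h, show q ^ t + 1 - 2 = q ^ t - 1 by omega]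
      simpa using Nat.sub_dvd_pow_sub_pow q 1 t
    have hDSq : 2 + (q - 1) ≤ (σ.map fun x => (Nat.digits q x).sum).sum := by
      have h1 : (2 : ℕ) ≡ (σ.map fun x => (Nat.digits q x).sum).sum [MOD q - 1] :=
        hmodq1.trans hmodq.symm
      have h2 := (Nat.modEq_iff_dvd' (by omega)).mp h1
      have h3 := Nat.le_of_dvd (by omega) h2
      omega
    have hqd : q ∣ multinom (p ^ s) σ :=
      dvd_multinom q _ σ hsum (val_lower q _ σ hsum 2 hvNq hDSq)
    exact Nat.Coprime.mul_dvd_of_dvd_of_dvd ((Nat.coprime_primes hp hq).mpr hpq) hpd hqd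
  · intro d hd
    have hσ0v : multinom (p ^ s) ((p ^ s - 2) ::ₘ 1 ::ₘ {1}) = (p ^ s) * (p ^ s - 1) := by
      obtain ⟨m, hm⟩ : ∃ m, p ^ s = m + 2 := ⟨p ^ s - 2, by omega⟩
      rw [multinom, hm]
      simp only [Multiset.map_cons, Multiset.map_singleton, Multiset.prod_cons,
        Multiset.prod_singleton, Nat.factorial_one, mul_one, one_mul]
      have hfac : (m + 2)! = ((m + 2) * (m + 1)) * m ! := by
        rw [Nat.factorial_succ, Nat.factorial_succ]
        ring
      rw [show m + 2 - 2 = m by omega, hfac,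
        Nat.mul_div_cancel _ (Nat.factorial_pos m), show m + 2 - 1 = m + 1 by omega]
    have hpart0 : IsPartition (p ^ s) ((p ^ s - 2) ::ₘ 1 ::ₘ {1}) := by
      constructor
      · intro x hx
        simp only [Multiset.mem_cons, Multiset.mem_singleton] at hx
        rcases hx with rfl | rfl | rfl <;> omega
      · simp only [Multiset.sum_cons, Multiset.sum_singleton]; omega
    have hle0 : ∀ x ∈ (p ^ s - 2) ::ₘ 1 ::ₘ ({1} : Multiset ℕ), x ≤ p ^ s - 2 := by
      intro x hx
      simp only [Multiset.mem_cons, Multiset.mem_singleton] at hx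
      rcases hx with rfl | rfl | rfl <;> omega
    have hdn : d ∣ p ^ s * q ^ t := by
      have h1 := hd _ hpart0 hle0
      rwa [hσ0v, show p ^ s - 1 = q ^ t by omega] at h1
    have hd0 : d ≠ 0 := by
      rintro rfl
      rw [zero_dvd_iff] at hdn
      have hpos : 0 < p ^ s * q ^ t := by positivity
      omega
    -- the partition giving p-valuation 1
    have hppow : p * p ^ (s - 1) = p ^ s := by
      rw [← _root_.pow_succ']
      congr 1
      omega
    have hplegit : p ^ (s - 1) + 2 ≤ p ^ s := by
      rcases Nat.eq_or_lt_of_le hs with h1 | h1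
      · have e0 : s = 1 := h1.symm
        subst e0
        simp only [Nat.sub_self, pow_zero, pow_one] at *
        omega
      · have h2 : p ≤ p ^ (s - 1) := by
          calc p = p ^ 1 := (pow_one p).symm
          _ ≤ p ^ (s - 1) := Nat.pow_le_pow_right (by omega) (by omega)
        nlinarith [hppow, hp2]
    have hpartp : IsPartition (p ^ s) (Multiset.replicate p (p ^ (s - 1))) := by
      constructor
      · intro x hx
        rw [Multiset.eq_of_mem_replicate hx]
        positivity
      · rw [Multiset.sum_replicate, smul_eq_mul, hppow]
    have hlep : ∀ x ∈ Multiset.replicate p (p ^ (s - 1)), x ≤ p ^ s - 2 := by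
      intro x hx
      rw [Multiset.eq_of_mem_replicate hx]
      omega
    have hvalp : padicValNat p (multinom (p ^ s) (Multiset.replicate p (p ^ (s - 1)))) = 1 := by
      rw [multinom_val p _ _ hpartp.2, Multiset.map_replicate, Multiset.sum_replicate,
        smul_eq_mul, geom_val p s, geom_val p (s - 1)]
      have e : ∑ i ∈ Finset.range s, p ^ i
          = p * (∑ i ∈ Finset.range (s - 1), p ^ i) + 1 := by
        conv_lhs => rw [show s = (s - 1) + 1 by omega]
        rw [geom_sum_succ]
      omega
    have hdp1 : padicValNat p d ≤ 1 := by
      have hdvd := hd _ hpartp hlep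
      have hm0 : multinom (p ^ s) (Multiset.replicate p (p ^ (s - 1))) ≠ 0 :=
        (multinom_pos _ _ hpartp.2).ne'
      have h1 : p ^ padicValNat p d ∣ multinom (p ^ s) (Multiset.replicate p (p ^ (s - 1))) :=
        dvd_trans pow_padicValNat_dvd hdvd
      have h2 := (padicValNat_dvd_iff_le hm0).mp h1
      omega
    -- the partition giving q-valuation 1
    have hqpow : q * q ^ (t - 1) = q ^ t := by
      rw [← _root_.pow_succ']
      congr 1
      omega
    have hqlegit : q ^ (t - 1) + 1 ≤ q ^ t := by
      have h2 : 1 ≤ q ^ (t - 1) := Nat.one_le_pow _ _ (by omega)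
      nlinarith [hqpow, hq2]
    have hpartq : IsPartition (p ^ s) (1 ::ₘ Multiset.replicate q (q ^ (t - 1))) := by
      constructor
      · intro x hx
        rcases Multiset.mem_cons.mp hx with rfl | hx2
        · omega
        · rw [Multiset.eq_of_mem_replicate hx2]
          positivity
      · rw [Multiset.sum_cons, Multiset.sum_replicate, smul_eq_mul, hqpow]
        omega
    have hleq : ∀ x ∈ 1 ::ₘ Multiset.replicate q (q ^ (t - 1)), x ≤ p ^ s - 2 := by
      intro x hx
      rcases Multiset.mem_cons.mp hx with rfl | hx2
      · omega
      · rw [Multiset.eq_of_mem_replicate hx2]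
        omega
    have hvalq : padicValNat q (multinom (p ^ s) (1 ::ₘ Multiset.replicate q (q ^ (t - 1)))) = 1 := by
      rw [multinom_val q _ _ hpartq.2, Multiset.map_cons, Multiset.sum_cons,
        Multiset.map_replicate, Multiset.sum_replicate, smul_eq_mul,
        Nat.factorial_one, padicValNat.one, geom_val q (t - 1), hvNqe]
      have e : ∑ i ∈ Finset.range t, q ^ i
          = q * (∑ i ∈ Finset.range (t - 1), q ^ i) + 1 := by
        conv_lhs => rw [show t = (t - 1) + 1 by omega]
        rw [geom_sum_succ]
      omega
    have hdq1 : padicValNat q d ≤ 1 := by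
      have hdvd := hd _ hpartq hleq
      have hm0 : multinom (p ^ s) (1 ::ₘ Multiset.replicate q (q ^ (t - 1))) ≠ 0 :=
        (multinom_pos _ _ hpartq.2).ne'
      have h1 : q ^ padicValNat q d ∣ multinom (p ^ s) (1 ::ₘ Multiset.replicate q (q ^ (t - 1))) :=
        dvd_trans pow_padicValNat_dvd hdvd
      have h2 := (padicValNat_dvd_iff_le hm0).mp h1
      omega
    -- conclude
    rw [← Nat.factorization_le_iff_dvd hd0 (Nat.mul_ne_zero (by omega) (by omega))]
    rw [Finsupp.le_def]
    intro r
    rw [Nat.factorization_mul (by omega) (by omega), hp.factorization, hq.factorization,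
      Finsupp.add_apply]
    rcases eq_or_ne r p with rfl | hrp
    · rw [Finsupp.single_eq_same, Finsupp.single_eq_of_ne' hpq.symm,
        Nat.factorization_def d hp]
      omega
    rcases eq_or_ne r q with rfl | hrq
    · rw [Finsupp.single_eq_of_ne' hpq, Finsupp.single_eq_same, Nat.factorization_def d hq]
      omega
    · have hle2 := (Nat.factorization_le_iff_dvd hd0
        (Nat.mul_ne_zero (by positivity) (by positivity))).mpr hdn
      have h3 := Finsupp.le_def.mp hle2 r
      rw [Nat.factorization_mul (by positivity) (by positivity),
        hp.factorization_pow, hq.factorization_pow, Finsupp.add_apply,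
        Finsupp.single_eq_of_ne' hrp.symm, Finsupp.single_eq_of_ne' hrq.symm] at h3
      rw [Finsupp.single_eq_of_ne' hrp.symm, Finsupp.single_eq_of_ne' hrq.symm]
      omega
end
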